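/- Let F be a field of characteristic 2, and let Q be a finite group whose Sylow 2-subgroup is isomorphic to the generalized quaternion group of order 2^{m+1} for some m ≥ 2 (i.e., to QuaternionGroup (2^{m-1})). Then for every finite-dimensional F-linear representation M of Q, dim_F H^2(Q, M) ≤ 3 · dim_F M. -/

import Mathlib

open CategoryTheory

noncomputable section

namespace QuatH2Aux

section Compat

universe u

variable {k G : Type u} [CommRing k] [Group G]

/-- the 1st differential, as a linear map -/
abbrev dOne (A : Rep.{u} k G) : (G → A) →ₗ[k] (G × G → A) := (groupCohomology.d₁₂ A).hom

lemma dOne_apply (A : Rep.{u} k G) (f : G → A) (g : G × G) :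
    dOne A f g = A.ρ g.1 (f g.2) - f (g.1 * g.2) + f g.1 := rfl

/-- the 2-cocycles -/
abbrev twoCocycles (A : Rep.{u} k G) : Submodule k (G × G → A) := groupCohomology.cocycles₂ A

lemma mem_twoCocycles_def {A : Rep.{u} k G} (f : G × G → A) :
    f ∈ twoCocycles A ↔ ∀ g h j : G,
      A.ρ g (f (h, j)) - f (g * h, j) + f (g, h * j) - f (g, h) = 0 :=
  groupCohomology.mem_cocycles₂_def f

lemma mem_twoCocycles_iff {A : Rep.{u} k G} (f : G × G → A) :
    f ∈ twoCocycles A ↔ ∀ g h j : G,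
      f (g * h, j) + f (g, h) = A.ρ g (f (h, j)) + f (g, h * j) :=
  groupCohomology.mem_cocycles₂_iff f

lemma twoCocycles_map_one_fst {A : Rep.{u} k G} (f : twoCocycles A) (g : G) :
    f (1, g) = f (1, 1) := groupCohomology.cocycles₂_map_one_fst f g

lemma twoCocycles_map_one_snd {A : Rep.{u} k G} (f : twoCocycles A) (g : G) :
    f (g, 1) = A.ρ g (f (1, 1)) := groupCohomology.cocycles₂_map_one_snd f g

/-- the 2-coboundaries, as a submodule of the 2-cocycles -/
abbrev twoCoboundaries (A : Rep.{u} k G) : Submodule k (twoCocycles A) :=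
  LinearMap.range ((dOne A).codRestrict (twoCocycles A)
    (fun c => groupCohomology.d₁₂_apply_mem_cocycles₂ c))

def twoCoboundariesOfMemRange {A : Rep.{u} k G} {f : G × G → A}
    (h : f ∈ LinearMap.range (dOne A)) : twoCoboundaries A :=
  ⟨⟨f, by obtain ⟨c, rfl⟩ := h; exact groupCohomology.d₁₂_apply_mem_cocycles₂ c⟩,
    by obtain ⟨c, rfl⟩ := h; exact ⟨c, rfl⟩⟩

lemma mem_range_of_mem_twoCoboundaries {A : Rep.{u} k G} {f : twoCocycles A}
    (h : f ∈ twoCoboundaries A) : f.1 ∈ LinearMap.range (dOne A) := by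
  obtain ⟨c, rfl⟩ := h
  exact ⟨c, rfl⟩

/-- the second cohomology as cocycles modulo coboundaries -/
abbrev H2 (A : Rep.{u} k G) := twoCocycles A ⧸ twoCoboundaries A

lemma twoCoboundaries_eq_ker (A : Rep.{u} k G) :
    twoCoboundaries A = LinearMap.ker (groupCohomology.H2π A).hom := by
  ext x
  rw [LinearMap.mem_ker]
  refine Iff.trans ?_ (groupCohomology.H2π_eq_zero_iff x).symm
  constructor
  · rintro ⟨c, rfl⟩
    exact ⟨c, rfl⟩
  · rintro ⟨c, hc⟩
    exact ⟨c, Subtype.ext hc⟩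

def h2Equiv (A : Rep.{u} k G) : H2 A ≃ₗ[k] groupCohomology A 2 :=
  (Submodule.quotEquivOfEq _ _ (twoCoboundaries_eq_ker A)).trans
    (LinearMap.quotKerEquivOfSurjective (groupCohomology.H2π A).hom
      ((ModuleCat.epi_iff_surjective _).1 inferInstance))

end Compat

section Char2

lemma c2_add_self (F : Type) [Field F] [CharP F 2] {V : Type*} [AddCommGroup V] [Module F V]
    (v : V) : v + v = 0 := by
  have h2 : (2 : F) = 0 := by exact_mod_cast CharP.cast_eq_zero F 2
  rw [← two_smul F v, h2, zero_smul]

lemma c2_sub (F : Type) [Field F] [CharP F 2] {V : Type*} [AddCommGroup V] [Module F V]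
    (v w : V) : v - w = v + w := by
  rw [sub_eq_add_neg, neg_eq_of_add_eq_zero_right (c2_add_self F w)]

end Char2

section MapH2

variable {F : Type} [Field F] {G : Type} [Group G]

/-- map on 2-cochains induced by a linear map on coefficients -/
def rawmap2 (A B : Rep F G) (φ : A →ₗ[F] B) : (G × G → A) →ₗ[F] (G × G → B) :=
  φ.compLeft (G × G)

def rawmap1 (A B : Rep F G) (φ : A →ₗ[F] B) : (G → A) →ₗ[F] (G → B) :=
  φ.compLeft G

lemma rawmap1_dOne (A B : Rep F G) (φ : A →ₗ[F] B)
    (hφ : ∀ (g : G) (x : A), φ (A.ρ g x) = B.ρ g (φ x)) (c : G → A) :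
    dOne B (rawmap1 A B φ c) = rawmap2 A B φ (dOne A c) := by
  funext gh
  simp only [rawmap1, rawmap2, LinearMap.compLeft_apply, dOne_apply, Function.comp_apply,
    map_add, map_sub, hφ]

lemma rawmap2_cocycle (A B : Rep F G) (φ : A →ₗ[F] B)
    (hφ : ∀ (g : G) (x : A), φ (A.ρ g x) = B.ρ g (φ x))
    {f : G × G → A} (hf : f ∈ twoCocycles A) :
    rawmap2 A B φ f ∈ twoCocycles B := by
  rw [mem_twoCocycles_def] at hf ⊢
  intro g h j
  have h2 : φ (A.ρ g (f (h, j)) - f (g * h, j) + f (g, h * j) - f (g, h)) = 0 := by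
    rw [hf g h j, map_zero]
  simpa only [rawmap2, LinearMap.compLeft_apply, Function.comp_apply, map_add, map_sub, hφ]
    using h2

/-- induced map on 2-cocycles -/
def zmap (A B : Rep F G) (φ : A →ₗ[F] B)
    (hφ : ∀ (g : G) (x : A), φ (A.ρ g x) = B.ρ g (φ x)) :
    twoCocycles A →ₗ[F] twoCocycles B :=
  (rawmap2 A B φ).restrict (fun _ hf => rawmap2_cocycle A B φ hφ hf)

lemma zmap_coe (A B : Rep F G) (φ : A →ₗ[F] B) (hφ) (z : twoCocycles A) :
    (zmap A B φ hφ z).1 = rawmap2 A B φ z.1 := rfl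

lemma zmap_boundary (A B : Rep F G) (φ : A →ₗ[F] B)
    (hφ : ∀ (g : G) (x : A), φ (A.ρ g x) = B.ρ g (φ x))
    (z : twoCocycles A) (hz : z ∈ twoCoboundaries A) :
    zmap A B φ hφ z ∈ twoCoboundaries B := by
  obtain ⟨c, hc⟩ := hz
  refine ⟨rawmap1 A B φ c, ?_⟩
  apply Subtype.ext
  have hc' : dOne A c = z.1 := congrArg Subtype.val hc
  show dOne B (rawmap1 A B φ c) = (zmap A B φ hφ z).1
  rw [rawmap1_dOne A B φ hφ, hc', zmap_coe]

/-- induced map on H2 -/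
def hmap (A B : Rep F G) (φ : A →ₗ[F] B)
    (hφ : ∀ (g : G) (x : A), φ (A.ρ g x) = B.ρ g (φ x)) : H2 A →ₗ[F] H2 B :=
  Submodule.mapQ _ _ (zmap A B φ hφ) (fun z hz => zmap_boundary A B φ hφ z hz)

lemma hmap_mk (A B : Rep F G) (φ : A →ₗ[F] B) (hφ) (z : twoCocycles A) :
    hmap A B φ hφ (Submodule.Quotient.mk z) = Submodule.Quotient.mk (zmap A B φ hφ z) :=
  rfl

lemma hmap_injective (A B : Rep F G) (φ : A →ₗ[F] B) (ψ : B →ₗ[F] A)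
    (hφ : ∀ (g : G) (x : A), φ (A.ρ g x) = B.ρ g (φ x))
    (hψ : ∀ (g : G) (x : B), ψ (B.ρ g x) = A.ρ g (ψ x))
    (hret : ∀ x : A, ψ (φ x) = x) :
    Function.Injective (hmap A B φ hφ) := by
  have hli : ∀ y : H2 A, hmap B A ψ hψ (hmap A B φ hφ y) = y := by
    intro y
    obtain ⟨z, rfl⟩ := Submodule.Quotient.mk_surjective _ y
    rw [hmap_mk, hmap_mk]
    congr 1
    apply Subtype.ext
    funext gh
    show ψ (φ (z.1 gh)) = z.1 gh
    exact hret _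
  intro x y hxy
  rw [← hli x, ← hli y, hxy]

end MapH2
section Coind

variable {F : Type} [Field F] {Q : Type} [Group Q] {G' : Type} [Group G']
  (ι : G' →* Q) (M : Rep F Q)

/-- restriction of M along ι -/
def NRep : Rep F G' := Rep.of (M.ρ.comp ι)

lemma NRep_ρ (p : G') : (NRep ι M).ρ p = M.ρ (ι p) := rfl

/-- underlying module of the coinduced representation -/
def coindV : Submodule F (Q → M) where
  carrier := {φ | ∀ (p : G') (u : Q), φ (ι p * u) = M.ρ (ι p) (φ u)}
  add_mem' := by
    intro φ ψ hφ hψ p u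
    simp only [Pi.add_apply, hφ p u, hψ p u, map_add]
  zero_mem' := by intro p u; simp
  smul_mem' := by
    intro r φ hφ p u
    simp only [Pi.smul_apply, hφ p u, map_smul]

/-- the coinduced representation -/
def coindρ : Representation F Q (coindV ι M) where
  toFun g :=
    { toFun := fun φ => ⟨fun u => φ.1 (u * g), fun p u => by
        show φ.1 (ι p * u * g) = M.ρ (ι p) (φ.1 (u * g))
        rw [mul_assoc]; exact φ.2 p (u * g)⟩
      map_add' := fun φ ψ => by apply Subtype.ext; funext u; rfl
      map_smul' := fun r φ => by apply Subtype.ext; funext u; rfl }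
  map_one' := by
    refine LinearMap.ext fun φ => Subtype.ext (funext fun u => ?_)
    show φ.1 (u * 1) = φ.1 u
    rw [mul_one]
  map_mul' g h := by
    refine LinearMap.ext fun φ => Subtype.ext (funext fun u => ?_)
    show φ.1 (u * (g * h)) = φ.1 (u * g * h)
    rw [mul_assoc]

abbrev CRep : Rep F Q := Rep.of (coindρ ι M)

lemma CRep_ρ_apply (g : Q) (φ : coindV ι M) (u : Q) :
    ((CRep ι M).ρ g φ).1 u = φ.1 (u * g) := rfl

/-- the unit map M → Coind -/
def ηv : M →ₗ[F] coindV ι M where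
  toFun m := ⟨fun q => M.ρ q m, fun p u => by simp [map_mul]⟩
  map_add' x y := by apply Subtype.ext; funext u; simp
  map_smul' r x := by apply Subtype.ext; funext u; simp

lemma ηv_equivariant (g : Q) (x : M) :
    ηv ι M (M.ρ g x) = (CRep ι M).ρ g (ηv ι M x) := by
  apply Subtype.ext
  funext u
  show M.ρ u (M.ρ g x) = M.ρ (u * g) x
  rw [map_mul]
  rfl

/-- the setoid whose classes are right cosets (orbits of left translation by ι(G')) -/
def rrel : Setoid Q where
  r v w := ∃ p : G', w = ι p * v
  iseqv := by
    constructor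
    · intro v; exact ⟨1, by simp⟩
    · rintro v w ⟨p, rfl⟩; exact ⟨p⁻¹, by simp [mul_assoc]⟩
    · rintro u v w ⟨p, rfl⟩ ⟨q, rfl⟩; exact ⟨q * p, by simp [mul_assoc]⟩

def Qt : Type := Quotient (rrel ι)

def mkQt (v : Q) : Qt ι := Quotient.mk (rrel ι) v

noncomputable instance [Fintype Q] : Fintype (Qt ι) :=
  @Quotient.fintype Q _ (rrel ι) (fun _ _ => Classical.dec _)

lemma exists_decomp (v : Q) : ∃ p : G', v = ι p * (Quotient.out (mkQt ι v)) := by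
  have h : (Quotient.mk (rrel ι) (Quotient.out (mkQt ι v))) = Quotient.mk (rrel ι) v := by
    exact Quotient.out_eq (mkQt ι v)
  exact Quotient.exact h

/-- the G'-part of v -/
def pFun (v : Q) : G' := Classical.choose (exists_decomp ι v)

lemma pFun_spec (v : Q) : v = ι (pFun ι v) * (Quotient.out (mkQt ι v)) :=
  Classical.choose_spec (exists_decomp ι v)

lemma mkQt_smul (p : G') (v : Q) : mkQt ι (ι p * v) = mkQt ι v :=
  Quotient.sound ⟨p⁻¹, by simp [mul_assoc]⟩

lemma pFun_mul (hι : Function.Injective ι) (p : G') (v : Q) :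
    pFun ι (ι p * v) = p * pFun ι v := by
  apply hι
  have h1 := pFun_spec ι (ι p * v)
  rw [mkQt_smul ι p v] at h1
  have h : ι (pFun ι (ι p * v)) * (Quotient.out (mkQt ι v))
      = ι (p * pFun ι v) * (Quotient.out (mkQt ι v)) := by
    rw [← h1, map_mul, mul_assoc, ← pFun_spec ι v]
  exact mul_right_cancel h

lemma pFun_out (hι : Function.Injective ι) (x : Qt ι) : pFun ι (Quotient.out x) = 1 := by
  have h := pFun_spec ι (Quotient.out x)
  have hx : mkQt ι (Quotient.out x) = x := Quotient.out_eq x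
  rw [hx] at h
  apply hι
  rw [map_one]
  have h2 : ι (pFun ι (Quotient.out x)) * Quotient.out x = 1 * Quotient.out x := by
    rw [one_mul, ← h]
  exact mul_right_cancel h2

variable [Fintype Q]

lemma card_decomp (hι : Function.Injective ι) :
    Nat.card Q = Nat.card G' * Nat.card (Qt ι) := by
  have E : Q ≃ G' × Qt ι :=
    { toFun := fun v => (pFun ι v, mkQt ι v)
      invFun := fun x => ι x.1 * Quotient.out x.2
      left_inv := fun v => (pFun_spec ι v).symm
      right_inv := by
        rintro ⟨p, x⟩
        refine Prod.ext ?_ ?_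
        · show pFun ι (ι p * Quotient.out x) = p
          rw [pFun_mul ι hι, pFun_out ι hι, mul_one]
        · show mkQt ι (ι p * Quotient.out x) = x
          rw [mkQt_smul ι]
          exact Quotient.out_eq x }
  rw [Nat.card_congr E, Nat.card_prod]

/-- translation action on Qt -/
def tQ (g : Q) : Qt ι ≃ Qt ι where
  toFun := Quotient.map (· * g) (by rintro v w ⟨p, rfl⟩; exact ⟨p, by simp [mul_assoc]⟩)
  invFun := Quotient.map (· * g⁻¹) (by rintro v w ⟨p, rfl⟩; exact ⟨p, by simp [mul_assoc]⟩)
  left_inv := by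
    intro x
    induction x using Quotient.ind
    simp [Quotient.map_mk, mul_assoc]; rfl
  right_inv := by
    intro x
    induction x using Quotient.ind
    simp [Quotient.map_mk, mul_assoc]; rfl

/-- the trace map Coind → M -/
def τv : coindV ι M →ₗ[F] M where
  toFun φ := ∑ x : Qt ι, M.ρ (Quotient.out x)⁻¹ (φ.1 (Quotient.out x))
  map_add' φ ψ := by simp [Finset.sum_add_distrib]
  map_smul' r φ := by simp [Finset.smul_sum]

lemma τv_equivariant (g : Q) (φ : coindV ι M) :
    τv ι M ((CRep ι M).ρ g φ) = M.ρ g (τv ι M φ) := by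
  show ∑ x : Qt ι, M.ρ (Quotient.out x)⁻¹ (φ.1 (Quotient.out x * g))
      = M.ρ g (∑ x : Qt ι, M.ρ (Quotient.out x)⁻¹ (φ.1 (Quotient.out x)))
  rw [map_sum]
  rw [← Equiv.sum_comp (tQ ι g) (fun y => M.ρ g (M.ρ (Quotient.out y)⁻¹ (φ.1 (Quotient.out y))))]
  apply Finset.sum_congr rfl
  intro x _
  have hw : tQ ι g x = mkQt ι (Quotient.out x * g) := by
    conv_lhs => rw [← Quotient.out_eq x]
    rfl
  set w := Quotient.out x * g with hwdef
  have hdec : w = ι (pFun ι w) * Quotient.out (mkQt ι w) := pFun_spec ι w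
  have hval : φ.1 w = M.ρ (ι (pFun ι w)) (φ.1 (Quotient.out (mkQt ι w))) := by
    conv_lhs => rw [hdec]
    exact φ.2 _ _
  rw [hval, hw]
  have hp : ι (pFun ι w) = w * (Quotient.out (mkQt ι w))⁻¹ :=
    eq_mul_inv_iff_mul_eq.mpr hdec.symm
  have hgrp : (Quotient.out x)⁻¹ * ι (pFun ι w)
      = g * (Quotient.out (mkQt ι w))⁻¹ := by
    rw [hp, hwdef]
    group
  rw [← LinearMap.comp_apply, ← Module.End.mul_eq_comp, ← map_mul, hgrp, map_mul]
  rfl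

lemma τv_ηv (hodd : ¬ 2 ∣ Nat.card (Qt ι)) [CharP F 2] (m : M) :
    τv ι M (ηv ι M m) = m := by
  show ∑ x : Qt ι, M.ρ (Quotient.out x)⁻¹ (M.ρ (Quotient.out x) m) = m
  have hterm : ∀ x : Qt ι, M.ρ (Quotient.out x)⁻¹ (M.ρ (Quotient.out x) m) = m := by
    intro x
    rw [← LinearMap.comp_apply, ← Module.End.mul_eq_comp, ← map_mul, inv_mul_cancel, map_one]
    rfl
  rw [Finset.sum_congr rfl (fun x _ => hterm x), Finset.sum_const]
  rw [Nat.card_eq_fintype_card] at hodd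
  obtain ⟨j, hj⟩ := Nat.odd_iff.mpr (Nat.two_dvd_ne_zero.mp hodd)
  rw [Finset.card_univ, hj]
  rw [add_nsmul, mul_nsmul, one_nsmul, two_nsmul, c2_add_self F, smul_zero, zero_add]

end Coind
section Shapiro

variable {F : Type} [Field F] {Q : Type} [Group Q] {G' : Type} [Group G']
  (ι : G' →* Q) (M : Rep F Q)

lemma c2_move [CharP F 2] {V : Type*} [AddCommGroup V] [Module F V] {a b c : V}
    (h : a + b = c) : a = c + b := by
  rw [← h, add_assoc, c2_add_self F, add_zero]

/-- raw restriction-evaluation map on cochains -/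
def rawres : ((Q × Q) → coindV ι M) →ₗ[F] ((G' × G') → NRep ι M) where
  toFun f := fun pq => (f (ι pq.1, ι pq.2)).1 1
  map_add' f g := by funext pq; simp; rfl
  map_smul' r f := by funext pq; simp; rfl

lemma rawres_apply (f : (Q × Q) → coindV ι M) (p₁ p₂ : G') :
    rawres ι M f (p₁, p₂) = (f (ι p₁, ι p₂)).1 1 := rfl

/-- basic evaluated cocycle identity -/
lemma E1 (z : twoCocycles (CRep ι M)) (a b d : Q) :
    (z.1 (a * b, d)).1 1 + (z.1 (a, b)).1 1
      = (z.1 (b, d)).1 a + (z.1 (a, b * d)).1 1 := by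
  have h := (mem_twoCocycles_iff (A := CRep ι M) z.1).1 z.2 a b d
  have h1 : (z.1 (a * b, d)).1 1 + (z.1 (a, b)).1 1
      = ((CRep ι M).ρ a (z.1 (b, d))).1 1 + (z.1 (a, b * d)).1 1 :=
    congrArg (fun ψ : coindV ι M => ψ.1 1) h
  rwa [CRep_ρ_apply, one_mul] at h1

lemma E1p [CharP F 2] (z : twoCocycles (CRep ι M)) (p : G') (b d : Q) :
    (z.1 (ι p * b, d)).1 1
      = M.ρ (ι p) ((z.1 (b, d)).1 1) + (z.1 (ι p, b * d)).1 1 + (z.1 (ι p, b)).1 1 := by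
  have h := E1 ι M z (ι p) b d
  have hval : (z.1 (b, d)).1 (ι p) = M.ρ (ι p) ((z.1 (b, d)).1 1) := by
    have h2 := (z.1 (b, d)).2 p 1
    rwa [mul_one] at h2
  rw [hval] at h
  exact c2_move (F := F) h

lemma resZ_mem (z : twoCocycles (CRep ι M)) :
    rawres ι M z.1 ∈ twoCocycles (NRep ι M) := by
  rw [mem_twoCocycles_iff]
  intro p₁ p₂ p₃
  have h := E1 ι M z (ι p₁) (ι p₂) (ι p₃)
  have hval : (z.1 (ι p₂, ι p₃)).1 (ι p₁) = M.ρ (ι p₁) ((z.1 (ι p₂, ι p₃)).1 1) := by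
    have h2 := (z.1 (ι p₂, ι p₃)).2 p₁ 1
    rwa [mul_one] at h2
  rw [hval] at h
  simp only [rawres_apply, map_mul]
  exact h

/-- induced map on 2-cocycles -/
def resZ : twoCocycles (CRep ι M) →ₗ[F] twoCocycles (NRep ι M) :=
  (rawres ι M).restrict (fun z hz => resZ_mem ι M ⟨z, hz⟩)

lemma resZ_coe (z : twoCocycles (CRep ι M)) : (resZ ι M z).1 = rawres ι M z.1 := rfl

lemma resZ_boundary (z : twoCocycles (CRep ι M)) (hz : z ∈ twoCoboundaries (CRep ι M)) :
    resZ ι M z ∈ twoCoboundaries (NRep ι M) := by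
  obtain ⟨C, hC⟩ := hz
  have hC' : dOne (CRep ι M) C = z.1 := congrArg Subtype.val hC
  refine ⟨fun p => (C (ι p)).1 1, Subtype.ext ?_⟩
  show dOne (NRep ι M) (fun p => (C (ι p)).1 1) = (resZ ι M z).1
  funext pq
  obtain ⟨p₁, p₂⟩ := pq
  rw [resZ_coe, rawres_apply, ← hC']
  show M.ρ (ι p₁) ((C (ι p₂)).1 1) - (C (ι (p₁ * p₂))).1 1 + (C (ι p₁)).1 1
      = ((CRep ι M).ρ (ι p₁) (C (ι p₂)) - C (ι p₁ * ι p₂) + C (ι p₁)).1 1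
  have hval : (C (ι p₂)).1 (ι p₁) = M.ρ (ι p₁) ((C (ι p₂)).1 1) := by
    have h2 := (C (ι p₂)).2 p₁ 1
    rwa [mul_one] at h2
  have hcoe : ((CRep ι M).ρ (ι p₁) (C (ι p₂)) - C (ι p₁ * ι p₂) + C (ι p₁)).1 1
      = ((CRep ι M).ρ (ι p₁) (C (ι p₂))).1 1 - (C (ι p₁ * ι p₂)).1 1 + (C (ι p₁)).1 1 := rfl
  rw [hcoe, CRep_ρ_apply, one_mul, hval, map_mul]

variable [CharP F 2]

/-- the correction function `D` -/
def Dfun (z : twoCocycles (CRep ι M)) (cM : G' → M) : Q → M :=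
  fun v => (z.1 (ι (pFun ι v), Quotient.out (mkQt ι v))).1 1 + cM (pFun ι v)

lemma Dfun_smul (hι : Function.Injective ι) (z : twoCocycles (CRep ι M)) (cM : G' → M)
    (hcc : ∀ p₁ p₂ : G', (z.1 (ι p₁, ι p₂)).1 1
      = M.ρ (ι p₁) (cM p₂) + cM (p₁ * p₂) + cM p₁)
    (p : G') (v : Q) :
    Dfun ι M z cM (ι p * v)
      = M.ρ (ι p) (Dfun ι M z cM v) + (z.1 (ι p, v)).1 1 + cM p := by
  have hv : v = ι (pFun ι v) * Quotient.out (mkQt ι v) := pFun_spec ι v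
  have hDpv : Dfun ι M z cM (ι p * v)
      = (z.1 (ι (p * pFun ι v), Quotient.out (mkQt ι v))).1 1 + cM (p * pFun ι v) := by
    unfold Dfun
    rw [pFun_mul ι hι, mkQt_smul ι]
  rw [hDpv, map_mul, E1p ι M z p (ι (pFun ι v)) (Quotient.out (mkQt ι v)), ← hv,
    hcc p (pFun ι v)]
  unfold Dfun
  rw [map_add]
  abel_nf
  simp only [two_nsmul, two_zsmul, c2_add_self F, add_zero, zero_add]
  try abel

lemma resZ_ker (hι : Function.Injective ι) (z : twoCocycles (CRep ι M))
    (hb : rawres ι M z.1 ∈ LinearMap.range (dOne (NRep ι M))) :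
    z ∈ twoCoboundaries (CRep ι M) := by
  classical
  obtain ⟨c0, hc0⟩ := hb
  let cM : G' → M := fun p => c0 p
  have hcc : ∀ p₁ p₂ : G', (z.1 (ι p₁, ι p₂)).1 1
      = M.ρ (ι p₁) (cM p₂) + cM (p₁ * p₂) + cM p₁ := by
    intro p₁ p₂
    have h := congrFun hc0 (p₁, p₂)
    rw [dOne_apply] at h
    rw [c2_sub F] at h
    exact h.symm
  set D := Dfun ι M z cM with hDdef
  have key1 : ∀ (p : G') (v : Q),
      D (ι p * v) = M.ρ (ι p) (D v) + (z.1 (ι p, v)).1 1 + cM p :=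
    fun p v => Dfun_smul ι M hι z cM hcc p v
  have memC : ∀ q : Q, (fun u => (z.1 (u, q)).1 1 + D (u * q) + D u) ∈ coindV ι M := by
    intro q p u
    show (z.1 (ι p * u, q)).1 1 + D (ι p * u * q) + D (ι p * u)
        = M.ρ (ι p) ((z.1 (u, q)).1 1 + D (u * q) + D u)
    rw [E1p ι M z p u q, mul_assoc, key1 p (u * q), key1 p u]
    simp only [map_add]
    abel_nf
    simp only [two_nsmul, two_zsmul, c2_add_self F, add_zero, zero_add]
    try abel
  refine ⟨fun q => ⟨fun u => (z.1 (u, q)).1 1 + D (u * q) + D u, memC q⟩, Subtype.ext ?_⟩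
  show dOne (CRep ι M) _ = z.1
  funext qq
  obtain ⟨q₁, q₂⟩ := qq
  apply Subtype.ext
  funext u
  rw [dOne_apply]
  have hcoe : ((((CRep ι M).ρ q₁ ⟨fun u => (z.1 (u, q₂)).1 1 + D (u * q₂) + D u, memC q₂⟩ :
        coindV ι M)
      - ⟨fun u => (z.1 (u, q₁ * q₂)).1 1 + D (u * (q₁ * q₂)) + D u, memC (q₁ * q₂)⟩
      + ⟨fun u => (z.1 (u, q₁)).1 1 + D (u * q₁) + D u, memC q₁⟩)).1 u
      = ((z.1 (u * q₁, q₂)).1 1 + D (u * q₁ * q₂) + D (u * q₁))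
        - ((z.1 (u, q₁ * q₂)).1 1 + D (u * (q₁ * q₂)) + D u)
        + ((z.1 (u, q₁)).1 1 + D (u * q₁) + D u) := rfl
  rw [hcoe]
  have hE : (z.1 (q₁, q₂)).1 u
      = (z.1 (u * q₁, q₂)).1 1 + (z.1 (u, q₁ * q₂)).1 1 + (z.1 (u, q₁)).1 1 := by
    have h' := c2_move (F := F) (E1 ι M z u q₁ q₂)
    rw [h']
    abel_nf
    simp only [two_nsmul, two_zsmul, c2_add_self F, add_zero, zero_add]
    try abel
  rw [hE, c2_sub F, mul_assoc]
  abel_nf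
  simp only [two_nsmul, two_zsmul, c2_add_self F, add_zero, zero_add]
  try abel

/-- induced map on H2 -/
def resH : H2 (CRep ι M) →ₗ[F] H2 (NRep ι M) :=
  Submodule.mapQ _ _ (resZ ι M) (fun z hz => resZ_boundary ι M z hz)

set_option synthInstance.maxHeartbeats 1000000 in
lemma resH_injective (hι : Function.Injective ι) : Function.Injective (resH ι M) := by
  have hker : ∀ w : H2 (CRep ι M), resH ι M w = 0 → w = 0 := by
    intro w hw
    obtain ⟨z, rfl⟩ := Submodule.Quotient.mk_surjective _ w
    have hz : resH ι M (Submodule.Quotient.mk z) = Submodule.Quotient.mk (resZ ι M z) := rfl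
    rw [hz, Submodule.Quotient.mk_eq_zero] at hw
    rw [Submodule.Quotient.mk_eq_zero]
    apply resZ_ker ι M hι z
    have h2 := mem_range_of_mem_twoCoboundaries hw
    rwa [← resZ_coe]
  intro a b h
  have hab : a - b = 0 := hker _ (by rw [map_sub, h, sub_self])
  rwa [sub_eq_zero] at hab

end Shapiro
section QuatLift

open QuaternionGroup

variable {n : ℕ}

lemma pow_eq_of_cast_eq {H : Type*} [Group H] (A : H) (h1 : A ^ (2 * n) = 1)
    (s t : ℕ) (h : (s : ZMod (2 * n)) = (t : ZMod (2 * n))) : A ^ s = A ^ t := by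
  have hmod : s ≡ t [MOD 2 * n] := (ZMod.natCast_eq_natCast_iff _ _ _).1 h
  have horder : orderOf A ∣ 2 * n := orderOf_dvd_of_pow_eq_one h1
  exact pow_eq_pow_iff_modEq.2 (hmod.of_dvd horder)

lemma quat_lift (hn : 0 < n) {H : Type*} [Group H] (X A : H)
    (h1 : A ^ (2 * n) = 1) (h2 : X * X * A ^ n = 1) (h3 : X * A * X * A ^ (n + 1) = 1) :
    ∃ φ : QuaternionGroup n →* H,
      (∀ i : ZMod (2 * n), φ (a i) = A ^ i.val) ∧
      (∀ i : ZMod (2 * n), φ (xa i) = X * A ^ i.val) := by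
  haveI : NeZero (2 * n) := ⟨by omega⟩
  have hXAX : X * A * X = (A ^ (n + 1))⁻¹ := mul_eq_one_iff_eq_inv.1 h3
  have hXinv : X⁻¹ = X * A ^ n := by
    apply inv_eq_of_mul_eq_one_right
    rw [← mul_assoc]; exact h2
  have hAn : (A ^ n)⁻¹ = A ^ n := by
    apply inv_eq_of_mul_eq_one_right
    rw [← pow_add]
    have he : n + n = 2 * n := by ring
    rw [he]; exact h1
  have hAinv : A⁻¹ = A ^ (2 * n - 1) := by
    apply inv_eq_of_mul_eq_one_right
    rw [← pow_succ']
    have he : 2 * n - 1 + 1 = 2 * n := by omega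
    rw [he]; exact h1
  have hAX : A * X = X * A⁻¹ := by
    calc A * X = X⁻¹ * (X * A * X) := by group
    _ = X⁻¹ * (A ^ (n + 1))⁻¹ := by rw [hXAX]
    _ = X * A ^ n * (A ^ (n + 1))⁻¹ := by rw [hXinv]
    _ = X * A⁻¹ := by group
  have hApowX : ∀ s : ℕ, A ^ s * X = X * (A⁻¹) ^ s := by
    intro s
    induction s with
    | zero => simp
    | succ s ih =>
      rw [pow_succ', mul_assoc, ih, ← mul_assoc, hAX, mul_assoc, ← pow_succ']
  have hswap : ∀ s : ℕ, A ^ s * X = X * A ^ ((2 * n - 1) * s) := by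
    intro s
    rw [hApowX, hAinv, ← pow_mul]
  have hcastm1 : ((2 * n - 1 : ℕ) : ZMod (2 * n)) = -1 := by
    have h1' : (1 : ℕ) ≤ 2 * n := by omega
    rw [Nat.cast_sub h1', ZMod.natCast_self, Nat.cast_one, zero_sub]
  have hvc : ∀ i : ZMod (2 * n), ((i.val : ℕ) : ZMod (2 * n)) = i := by
    intro i
    rw [ZMod.natCast_val, ZMod.cast_id]
  refine ⟨MonoidHom.mk' (fun g => match g with
    | a i => A ^ i.val
    | xa i => X * A ^ i.val) ?_, fun i => rfl, fun i => rfl⟩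
  rintro (i | i) (j | j)
  · show A ^ (i + j).val = A ^ i.val * A ^ j.val
    rw [← pow_add]
    apply pow_eq_of_cast_eq A h1
    rw [hvc, Nat.cast_add, hvc, hvc]
  · show X * A ^ (j - i).val = A ^ i.val * (X * A ^ j.val)
    rw [← mul_assoc, hswap, mul_assoc, ← pow_add]
    congr 1
    apply pow_eq_of_cast_eq A h1
    rw [hvc, Nat.cast_add, Nat.cast_mul, hcastm1, hvc, hvc]
    ring
  · show X * A ^ (i + j).val = X * A ^ i.val * A ^ j.val
    rw [mul_assoc, ← pow_add]
    congr 1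
    apply pow_eq_of_cast_eq A h1
    rw [hvc, Nat.cast_add, hvc, hvc]
  · show A ^ ((n : ZMod (2 * n)) + j - i).val = X * A ^ i.val * (X * A ^ j.val)
    have hXX : X * X = A ^ n := by rw [mul_eq_one_iff_eq_inv.1 h2, hAn]
    calc A ^ ((n : ZMod (2 * n)) + j - i).val
        = A ^ (n + ((2 * n - 1) * i.val + j.val)) := by
          apply pow_eq_of_cast_eq A h1
          rw [hvc, Nat.cast_add, Nat.cast_add, Nat.cast_mul, hcastm1, hvc, hvc]
          ring
      _ = A ^ n * A ^ ((2 * n - 1) * i.val + j.val) := by rw [pow_add]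
      _ = X * X * A ^ ((2 * n - 1) * i.val + j.val) := by rw [hXX]
      _ = X * (X * A ^ ((2 * n - 1) * i.val)) * A ^ j.val := by
          rw [pow_add]; group
      _ = X * (A ^ i.val * X) * A ^ j.val := by rw [hswap]
      _ = X * A ^ i.val * (X * A ^ j.val) := by group

end QuatLift
section ThetaBound

open QuaternionGroup

variable {F : Type} [Field F] [CharP F 2] {n : ℕ} (N : Rep F (QuaternionGroup n))

/-- accumulated cocycle value along a word -/
def Tfun (f : QuaternionGroup n × QuaternionGroup n → N) :
    List (QuaternionGroup n) → N
  | [] => 0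
  | g :: L => f (g, L.prod) + N.ρ g (Tfun f L)

lemma Tfun_add (f f' : QuaternionGroup n × QuaternionGroup n → N)
    (L : List (QuaternionGroup n)) :
    Tfun N (f + f') L = Tfun N f L + Tfun N f' L := by
  induction L with
  | nil => simp [Tfun]
  | cons g L ih => simp only [Tfun, ih, Pi.add_apply, map_add]; abel

lemma Tfun_smul (r : F) (f : QuaternionGroup n × QuaternionGroup n → N)
    (L : List (QuaternionGroup n)) :
    Tfun N (r • f) L = r • Tfun N f L := by
  induction L with
  | nil => simp [Tfun]
  | cons g L ih => simp only [Tfun, ih, Pi.smul_apply, map_smul, smul_add]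

/-- accumulated coboundary-generator value along a word -/
def Sfun (c : QuaternionGroup n → N) : List (QuaternionGroup n) → N
  | [] => 0
  | g :: L => c g + N.ρ g (Sfun c L)

lemma Sfun_congr (c c' : QuaternionGroup n → N) (L : List (QuaternionGroup n))
    (h : ∀ g ∈ L, c g = c' g) : Sfun N c L = Sfun N c' L := by
  induction L with
  | nil => rfl
  | cons g L ih =>
    simp only [Sfun]
    rw [h g List.mem_cons_self, ih (fun g' hg' => h g' (List.mem_cons_of_mem g hg'))]

lemma Sfun_add (c c' : QuaternionGroup n → N) (L : List (QuaternionGroup n)) :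
    Sfun N (c + c') L = Sfun N c L + Sfun N c' L := by
  induction L with
  | nil => simp [Sfun]
  | cons g L ih => simp only [Sfun, ih, Pi.add_apply, map_add]; abel

lemma Sfun_smul (r : F) (c : QuaternionGroup n → N) (L : List (QuaternionGroup n)) :
    Sfun N (r • c) L = r • Sfun N c L := by
  induction L with
  | nil => simp [Sfun]
  | cons g L ih => simp only [Sfun, ih, Pi.smul_apply, map_smul, smul_add]

/-- key relation between Tfun of a coboundary and Sfun -/
lemma Tfun_dOne (c : QuaternionGroup n → N) (L : List (QuaternionGroup n)) :
    Tfun N (dOne N c) L = c L.prod + N.ρ L.prod (c 1) + Sfun N c L := by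
  induction L with
  | nil =>
    show (0 : N) = c 1 + N.ρ 1 (c 1) + 0
    rw [map_one, add_zero]
    show (0 : N) = c 1 + c 1
    rw [c2_add_self F]
  | cons g L ih =>
    show dOne N c (g, L.prod) + N.ρ g (Tfun N (dOne N c) L) = _
    rw [ih, dOne_apply, c2_sub F, map_add, map_add, ← Module.End.mul_apply, ← map_mul,
      List.prod_cons]
    show N.ρ g (c L.prod) + c (g * L.prod) + c g
        + (N.ρ g (c L.prod) + N.ρ (g * L.prod) (c 1) + N.ρ g (Sfun N c L))
      = c (g * L.prod) + N.ρ (g * L.prod) (c 1) + (c g + N.ρ g (Sfun N c L))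
    abel_nf
    simp only [two_nsmul, two_zsmul, c2_add_self F, add_zero, zero_add]
    try abel

/-- the three relator words of the quaternion group -/
def relList1 : List (QuaternionGroup n) := List.replicate (2 * n) (a 1)
def relList2 : List (QuaternionGroup n) := xa 0 :: xa 0 :: List.replicate n (a 1)
def relList3 : List (QuaternionGroup n) := xa 0 :: a 1 :: xa 0 :: List.replicate (n + 1) (a 1)

lemma prod_replicate_a (k : ℕ) :
    (List.replicate k (a 1 : QuaternionGroup n)).prod = a (k : ZMod (2 * n)) := by
  rw [List.prod_replicate, a_one_pow]

lemma nn_cast_zero : ((n : ZMod (2 * n)) + (n : ZMod (2 * n))) = 0 := by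
  rw [← Nat.cast_add]
  have h : n + n = 2 * n := by ring
  rw [h, ZMod.natCast_self]

lemma relList1_prod : (relList1 (n := n)).prod = 1 := by
  rw [relList1, prod_replicate_a, ZMod.natCast_self, one_def]

lemma relList2_prod : (relList2 (n := n)).prod = 1 := by
  rw [relList2, List.prod_cons, List.prod_cons, prod_replicate_a, xa_mul_a, xa_mul_xa,
    zero_add, sub_zero, nn_cast_zero, one_def]

lemma relList3_prod : (relList3 (n := n)).prod = 1 := by
  rw [relList3, List.prod_cons, List.prod_cons, List.prod_cons, prod_replicate_a,
    xa_mul_a, a_mul_xa, xa_mul_xa, zero_add]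
  have h : ((n + 1 : ℕ) : ZMod (2 * n)) - 1 = (n : ZMod (2 * n)) := by push_cast; ring
  rw [h, sub_zero, nn_cast_zero, one_def]

/-- the linear map θ on cocycles -/
def θmapZ : twoCocycles N →ₗ[F] (N × N × N) where
  toFun z := (Tfun N z.1 relList1, Tfun N z.1 relList2, Tfun N z.1 relList3)
  map_add' x y := by
    simp only [Submodule.coe_add, Tfun_add, Prod.mk_add_mk]
  map_smul' r x := by
    simp only [Submodule.coe_smul, Tfun_smul, Prod.smul_mk, RingHom.id_apply]

/-- selection function -/
def sel (v w : N) : QuaternionGroup n → N :=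
  fun g => if g = a 1 then v else if g = xa 0 then w else 0

lemma sel_a (v w : N) : sel N v w (a 1) = v := if_pos rfl

lemma sel_xa (v w : N) : sel N v w (xa 0) = w := by
  have h1 : (xa 0 : QuaternionGroup n) ≠ a 1 := by simp
  rw [sel, if_neg h1, if_pos rfl]

lemma sel_add (v v' w w' : N) : sel N (v + v') (w + w') = sel N v w + sel N v' w' := by
  funext g
  simp only [sel, Pi.add_apply]
  by_cases h1 : g = a 1
  · simp [h1]
  · by_cases h2 : g = xa 0 <;> simp [h1, h2]

lemma sel_smul (r : F) (v w : N) : sel N (r • v) (r • w) = r • sel N v w := by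
  funext g
  simp only [sel, Pi.smul_apply]
  by_cases h1 : g = a 1
  · simp [h1]
  · by_cases h2 : g = xa 0 <;> simp [h1, h2]

/-- the linear map Λ recording coboundary θ-values -/
def Λmap : (N × N) →ₗ[F] (N × N × N) where
  toFun vw := (Sfun N (sel N vw.1 vw.2) relList1, Sfun N (sel N vw.1 vw.2) relList2,
    Sfun N (sel N vw.1 vw.2) relList3)
  map_add' x y := by
    simp only [Prod.fst_add, Prod.snd_add, sel_add, Sfun_add, Prod.mk_add_mk]
  map_smul' r x := by
    simp only [Prod.smul_fst, Prod.smul_snd, sel_smul, Sfun_smul, Prod.smul_mk,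
      RingHom.id_apply]

lemma mem_relList1 (g : QuaternionGroup n) (h : g ∈ relList1 (n := n)) :
    g = a 1 ∨ g = xa 0 := by
  rw [relList1, List.mem_replicate] at h
  exact Or.inl h.2

lemma mem_relList2 (g : QuaternionGroup n) (h : g ∈ relList2 (n := n)) :
    g = a 1 ∨ g = xa 0 := by
  rw [relList2, List.mem_cons, List.mem_cons] at h
  rcases h with h | h | h
  · exact Or.inr h
  · exact Or.inr h
  · rw [List.mem_replicate] at h; exact Or.inl h.2

lemma mem_relList3 (g : QuaternionGroup n) (h : g ∈ relList3 (n := n)) :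
    g = a 1 ∨ g = xa 0 := by
  rw [relList3, List.mem_cons, List.mem_cons, List.mem_cons] at h
  rcases h with h | h | h | h
  · exact Or.inr h
  · exact Or.inl h
  · exact Or.inr h
  · rw [List.mem_replicate] at h; exact Or.inl h.2

lemma Tfun_dOne_eq_sel (hn : 0 < n) (c : QuaternionGroup n → N)
    (L : List (QuaternionGroup n)) (hL : L.prod = 1)
    (hmem : ∀ g ∈ L, g = a 1 ∨ g = xa 0) :
    Tfun N (dOne N c) L = Sfun N (sel N (c (a 1)) (c (xa 0))) L := by
  rw [Tfun_dOne, hL, map_one]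
  show c 1 + c 1 + Sfun N c L = _
  rw [c2_add_self F, zero_add]
  apply Sfun_congr
  intro g hg
  rcases hmem g hg with h | h
  · rw [h, sel_a]
  · rw [h, sel_xa]

lemma θmapZ_boundary (hn : 0 < n) (c : QuaternionGroup n → N)
    (y : twoCocycles N) (hy : y.1 = dOne N c) :
    θmapZ N y = Λmap N (c (a 1), c (xa 0)) := by
  show (Tfun N y.1 relList1, Tfun N y.1 relList2, Tfun N y.1 relList3) = _
  rw [hy, Tfun_dOne_eq_sel N hn c relList1 relList1_prod (mem_relList1),
    Tfun_dOne_eq_sel N hn c relList2 relList2_prod (mem_relList2),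
    Tfun_dOne_eq_sel N hn c relList3 relList3_prod (mem_relList3)]
  rfl

end ThetaBound
section Extension

open QuaternionGroup

variable {F : Type} [Field F] [CharP F 2] {n : ℕ} (N : Rep F (QuaternionGroup n))

lemma normalized_boundary (hn : 0 < n) (z : twoCocycles N)
    (h11 : z.1 (1, 1) = 0) (hθ : θmapZ N z = 0) :
    z ∈ twoCoboundaries N := by
  haveI : NeZero (2 * n) := ⟨by omega⟩
  have hco : ∀ g₁ g₂ g₃ : QuaternionGroup n,
      z.1 (g₁ * g₂, g₃) + z.1 (g₁, g₂) = N.ρ g₁ (z.1 (g₂, g₃)) + z.1 (g₁, g₂ * g₃) :=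
    (mem_twoCocycles_iff (A := N) z.1).1 z.2
  have hone_fst : ∀ g : QuaternionGroup n, z.1 (1, g) = 0 := by
    intro g
    have h := twoCocycles_map_one_fst (A := N) z g
    show z.1 (1, g) = 0
    rw [show ((z : QuaternionGroup n × QuaternionGroup n → N) (1, g) : N) = z.1 (1, g) from rfl,
      show ((z : QuaternionGroup n × QuaternionGroup n → N) (1, 1) : N) = z.1 (1, 1) from rfl]
      at h
    rw [h, h11]
  have hone_snd : ∀ g : QuaternionGroup n, z.1 (g, 1) = 0 := by
    intro g
    have h := twoCocycles_map_one_snd (A := N) z g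
    show z.1 (g, 1) = 0
    rw [show ((z : QuaternionGroup n × QuaternionGroup n → N) (g, 1) : N) = z.1 (g, 1) from rfl,
      show ((z : QuaternionGroup n × QuaternionGroup n → N) (1, 1) : N) = z.1 (1, 1) from rfl]
      at h
    rw [h, h11, map_zero]
  -- the extension group structure on N × Q
  letI grp : Group (N × QuaternionGroup n) :=
    { mul := fun x y => (x.1 + N.ρ x.2 y.1 + z.1 (x.2, y.2), x.2 * y.2)
      one := (0, 1)
      inv := fun x => (N.ρ x.2⁻¹ (x.1 + z.1 (x.2, x.2⁻¹)), x.2⁻¹)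
      mul_assoc := by
        rintro ⟨x1, x2⟩ ⟨y1, y2⟩ ⟨w1, w2⟩
        refine Prod.ext ?_ (mul_assoc x2 y2 w2)
        show x1 + N.ρ x2 y1 + z.1 (x2, y2) + N.ρ (x2 * y2) w1 + z.1 (x2 * y2, w2)
          = x1 + N.ρ x2 (y1 + N.ρ y2 w1 + z.1 (y2, w2)) + z.1 (x2, y2 * w2)
        have h := hco x2 y2 w2
        rw [c2_move (F := F) h, map_mul, Module.End.mul_apply, map_add, map_add]
        abel_nf
        simp only [two_nsmul, two_zsmul, c2_add_self F, add_zero, zero_add]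
        try abel
      one_mul := by
        rintro ⟨x1, x2⟩
        refine Prod.ext ?_ (one_mul x2)
        show 0 + N.ρ 1 x1 + z.1 (1, x2) = x1
        rw [hone_fst, map_one, add_zero, zero_add, Module.End.one_apply]
      mul_one := by
        rintro ⟨x1, x2⟩
        refine Prod.ext ?_ (mul_one x2)
        show x1 + N.ρ x2 0 + z.1 (x2, 1) = x1
        rw [hone_snd, map_zero, add_zero, add_zero]
      inv_mul_cancel := by
        rintro ⟨x1, x2⟩
        refine Prod.ext ?_ (inv_mul_cancel x2)
        show N.ρ x2⁻¹ (x1 + z.1 (x2, x2⁻¹)) + N.ρ x2⁻¹ x1 + z.1 (x2⁻¹, x2) = 0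
        have h := hco x2⁻¹ x2 x2⁻¹
        rw [inv_mul_cancel, mul_inv_cancel, hone_fst, hone_snd, zero_add, add_zero] at h
        rw [map_add, h]
        abel_nf
        simp only [two_nsmul, two_zsmul, c2_add_self F, add_zero, zero_add]
        try abel }
  have mul_def : ∀ x y : N × QuaternionGroup n,
      x * y = (x.1 + N.ρ x.2 y.1 + z.1 (x.2, y.2), x.2 * y.2) := fun _ _ => rfl
  have snd_mul : ∀ x y : N × QuaternionGroup n, (x * y).2 = x.2 * y.2 := fun _ _ => rfl
  have snd_pow : ∀ (x : N × QuaternionGroup n) (k : ℕ), (x ^ k).2 = x.2 ^ k := by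
    intro x k
    induction k with
    | zero => rfl
    | succ k ih => rw [pow_succ, pow_succ, snd_mul, ih]
  set X : N × QuaternionGroup n := ((0 : N), (xa 0 : QuaternionGroup n)) with hX
  set A : N × QuaternionGroup n := ((0 : N), (a 1 : QuaternionGroup n)) with hA
  have hPL : ∀ L : List (QuaternionGroup n),
      (L.map (fun g => ((0 : N), g))).prod = (Tfun N z.1 L, L.prod) := by
    intro L
    induction L with
    | nil =>
      show (1 : N × QuaternionGroup n) = (Tfun N z.1 [], (1 : QuaternionGroup n))
      rw [show Tfun N z.1 [] = 0 from rfl]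
      rfl
    | cons g L ih =>
      rw [List.map_cons, List.prod_cons, ih, mul_def]
      refine Prod.ext ?_ (List.prod_cons).symm
      show 0 + N.ρ g (Tfun N z.1 L) + z.1 (g, L.prod) = Tfun N z.1 (g :: L)
      rw [show Tfun N z.1 (g :: L) = z.1 (g, L.prod) + N.ρ g (Tfun N z.1 L) from rfl,
        zero_add, add_comm]
  have ht1 : Tfun N z.1 relList1 = 0 := by
    have h := congrArg Prod.fst hθ
    exact h
  have ht2 : Tfun N z.1 relList2 = 0 := by
    have h := congrArg (fun t : (N × N × N) => t.2.1) hθ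
    exact h
  have ht3 : Tfun N z.1 relList3 = 0 := by
    have h := congrArg (fun t : (N × N × N) => t.2.2) hθ
    exact h
  have h1 : A ^ (2 * n) = 1 := by
    have h := hPL relList1
    have hmap : relList1.map (fun g => ((0 : N), g)) = List.replicate (2 * n) A := by
      rw [relList1, List.map_replicate]
    rw [hmap, List.prod_replicate, ht1, relList1_prod] at h
    exact h
  have h2 : X * X * A ^ n = 1 := by
    have h := hPL relList2
    have hmap : relList2.map (fun g => ((0 : N), g)) = X :: X :: List.replicate n A := by
      rw [relList2, List.map_cons, List.map_cons, List.map_replicate]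
    rw [hmap, List.prod_cons, List.prod_cons, List.prod_replicate, ht2, relList2_prod] at h
    rw [mul_assoc]
    exact h
  have h3 : X * A * X * A ^ (n + 1) = 1 := by
    have h := hPL relList3
    have hmap : relList3.map (fun g => ((0 : N), g))
        = X :: A :: X :: List.replicate (n + 1) A := by
      rw [relList3, List.map_cons, List.map_cons, List.map_cons, List.map_replicate]
    rw [hmap, List.prod_cons, List.prod_cons, List.prod_cons, List.prod_replicate, ht3,
      relList3_prod] at h
    calc X * A * X * A ^ (n + 1) = X * (A * (X * A ^ (n + 1))) := by group
    _ = 1 := h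
  obtain ⟨φ, hφa, hφxa⟩ := quat_lift hn X A h1 h2 h3
  have hsnd : ∀ g : QuaternionGroup n, (φ g).2 = g := by
    rintro (i | i)
    · rw [hφa i, snd_pow]
      show (a 1 : QuaternionGroup n) ^ i.val = a i
      rw [a_one_pow, ZMod.natCast_val, ZMod.cast_id]
    · rw [hφxa i, snd_mul, snd_pow]
      show xa 0 * (a 1 : QuaternionGroup n) ^ i.val = xa i
      rw [a_one_pow, xa_mul_a, zero_add, ZMod.natCast_val, ZMod.cast_id]
  have humul : ∀ p q : QuaternionGroup n,
      (φ (p * q)).1 = (φ p).1 + N.ρ p ((φ q).1) + z.1 (p, q) := by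
    intro p q
    have h := congrArg Prod.fst (φ.map_mul p q)
    have h2 : (φ p * φ q).1
        = (φ p).1 + N.ρ ((φ p).2) ((φ q).1) + z.1 ((φ p).2, (φ q).2) := rfl
    rw [h2, hsnd p, hsnd q] at h
    exact h
  refine ⟨fun p => (φ p).1, Subtype.ext ?_⟩
  show dOne N (fun p => (φ p).1) = z.1
  funext pq
  obtain ⟨p, q⟩ := pq
  simp only [dOne_apply]
  show N.ρ p ((φ q).1) - (φ (p * q)).1 + (φ p).1 = z.1 (p, q)
  rw [c2_sub F, humul p q]
  abel_nf
  simp only [two_nsmul, two_zsmul, c2_add_self F, add_zero, zero_add]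
  try abel

lemma theta_ker (hn : 0 < n) (z : twoCocycles N)
    (hmem : θmapZ N z ∈ LinearMap.range (Λmap N)) :
    z ∈ twoCoboundaries N := by
  haveI : NeZero (2 * n) := ⟨by omega⟩
  haveI : Fact (1 < 2 * n) := ⟨by omega⟩
  obtain ⟨⟨v, w⟩, hvw⟩ := hmem
  set c' : QuaternionGroup n → N := fun g =>
    if g = a 1 then v else if g = xa 0 then w else if g = 1 then z.1 (1, 1) else 0 with hc'
  have hc'a : c' (a 1) = v := if_pos rfl
  have hc'xa : c' (xa 0) = w := by
    rw [hc']
    have hne : (xa 0 : QuaternionGroup n) ≠ a 1 := by simp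
    simp [if_neg hne]
  have hc'1 : c' 1 = z.1 (1, 1) := by
    rw [hc']
    have hne1 : (1 : QuaternionGroup n) ≠ a 1 := by
      rw [one_def, Ne, a.injEq]
      exact zero_ne_one
    have hne2 : (1 : QuaternionGroup n) ≠ xa 0 := by
      rw [one_def]
      intro h
      cases h
    simp [if_neg hne1, if_neg hne2]
  set bz : twoCoboundaries N := twoCoboundariesOfMemRange (A := N) ⟨c', rfl⟩ with hbz
  have hbz1 : (bz.1).1 = dOne N c' := rfl
  set h' : twoCocycles N := z + bz.1 with hh'
  have h'11 : h'.1 (1, 1) = 0 := by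
    rw [hh']
    show z.1 (1, 1) + (bz.1).1 (1, 1) = 0
    rw [hbz1, dOne_apply, map_one, Module.End.one_apply, one_mul, sub_add_cancel, hc'1,
      c2_add_self F]
  have hθ' : θmapZ N h' = 0 := by
    rw [hh', map_add, θmapZ_boundary N hn c' bz.1 hbz1, hc'a, hc'xa, ← hvw]
    exact c2_add_self F _
  have hmem' : h' ∈ twoCoboundaries N := normalized_boundary N hn h' h'11 hθ'
  have hz : z = h' - bz.1 := by rw [hh']; abel
  rw [hz]
  exact Submodule.sub_mem _ hmem' bz.2

lemma quat_H2_bound (hn : 0 < n) [FiniteDimensional F N] :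
    Module.finrank F (H2 N) ≤ 3 * Module.finrank F N := by
  classical
  have hle : twoCoboundaries N ≤ Submodule.comap (θmapZ N) (LinearMap.range (Λmap N)) := by
    intro y hy
    obtain ⟨c, hc⟩ := hy
    have hy1 : y.1 = dOne N c := (congrArg Subtype.val hc).symm
    rw [Submodule.mem_comap, θmapZ_boundary N hn c y hy1]
    exact ⟨(c (a 1), c (xa 0)), rfl⟩
  set θH : H2 N →ₗ[F] ((N × N × N) ⧸ (LinearMap.range (Λmap N))) :=
    Submodule.mapQ _ _ (θmapZ N) hle with hθH
  have hinj : Function.Injective θH := by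
    have hker : ∀ w : H2 N, θH w = 0 → w = 0 := by
      intro w hw
      obtain ⟨z, rfl⟩ := Submodule.Quotient.mk_surjective _ w
      have he : θH (Submodule.Quotient.mk z) = Submodule.Quotient.mk (θmapZ N z) := rfl
      rw [he, Submodule.Quotient.mk_eq_zero] at hw
      rw [Submodule.Quotient.mk_eq_zero]
      exact theta_ker N hn z hw
    intro x y h
    have hxy : x - y = 0 := hker _ (by rw [map_sub, h, sub_self])
    rwa [sub_eq_zero] at hxy
  calc Module.finrank F (H2 N)
      ≤ Module.finrank F ((N × N × N) ⧸ (LinearMap.range (Λmap N))) :=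
        LinearMap.finrank_le_finrank_of_injective hinj
    _ ≤ Module.finrank F (N × N × N) := Submodule.finrank_quotient_le _
    _ = 3 * Module.finrank F N := by
        rw [Module.finrank_prod, Module.finrank_prod]
        ring

end Extension

end QuatH2Aux

open QuatH2Aux

/-- Let `F` be a field of characteristic `2`, and let `Q` be a finite group
whose Sylow `2`-subgroup is isomorphic to the generalized quaternion group of order `2^(m+1)`
for some `m ≥ 2` (i.e. to `QuaternionGroup (2^(m-1))`).  Then for every finite-dimensional
`F`-linear representation `M` of `Q`, `dim_F H^2(Q, M) ≤ 3 · dim_F M`. -/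
theorem finrank_groupCohomology_two_le_of_quaternion_sylow
    (F : Type) [Field F] [CharP F 2]
    (Q : Type) [Group Q] [Fintype Q]
    (m : ℕ) (hm : 2 ≤ m) (P : Sylow 2 Q)
    (hP : Nonempty (↥(P : Subgroup Q) ≃* QuaternionGroup (2 ^ (m - 1))))
    (M : Rep F Q) [FiniteDimensional F M.V] :
    Module.finrank F (groupCohomology M 2) ≤ 3 * Module.finrank F M.V := by
  classical
  obtain ⟨e⟩ := hP
  haveI : Fact (Nat.Prime 2) := ⟨Nat.prime_two⟩
  set n : ℕ := 2 ^ (m - 1) with hn_def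
  have hn : 0 < n := by positivity
  haveI : NeZero n := ⟨hn.ne'⟩
  set ι : QuaternionGroup n →* Q := ((P : Subgroup Q).subtype).comp e.symm.toMonoidHom
    with hι_def
  have hι : Function.Injective ι := by
    intro x y h
    apply e.symm.injective
    apply Subgroup.subtype_injective
    exact h
  haveI : (P : Subgroup Q).FiniteIndex := ⟨Subgroup.index_ne_zero_of_finite⟩
  have hodd : ¬ 2 ∣ Nat.card (Qt ι) := by
    have hc1 : Nat.card Q = Nat.card (QuaternionGroup n) * Nat.card (Qt ι) :=
      card_decomp ι hι
    have hc2 : Nat.card (P : Subgroup Q) * (P : Subgroup Q).index = Nat.card Q :=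
      Subgroup.card_mul_index _
    have hc3 : Nat.card (QuaternionGroup n) = Nat.card (P : Subgroup Q) :=
      (Nat.card_congr e.toEquiv).symm
    have hpos : 0 < Nat.card (P : Subgroup Q) := Nat.card_pos
    have hqt : Nat.card (Qt ι) = (P : Subgroup Q).index := by
      apply Nat.eq_of_mul_eq_mul_left hpos
      calc Nat.card (P : Subgroup Q) * Nat.card (Qt ι)
          = Nat.card (QuaternionGroup n) * Nat.card (Qt ι) := by rw [hc3]
        _ = Nat.card Q := hc1.symm
        _ = Nat.card (P : Subgroup Q) * (P : Subgroup Q).index := hc2.symm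
    rw [hqt]
    exact Sylow.not_dvd_index P
  haveI hfdM : FiniteDimensional F M := ‹FiniteDimensional F M.V›
  haveI hfdN : FiniteDimensional F (NRep ι M) := ‹FiniteDimensional F M.V›
  have hinj1 : Function.Injective
      (hmap M (CRep ι M) (ηv ι M) (ηv_equivariant ι M)) :=
    hmap_injective M (CRep ι M) (ηv ι M) (τv ι M) (ηv_equivariant ι M)
      (τv_equivariant ι M) (τv_ηv ι M hodd)
  have hinj2 : Function.Injective (resH ι M) := resH_injective ι M hι
  have hcomp : Function.Injective
      ((resH ι M).comp (hmap M (CRep ι M) (ηv ι M) (ηv_equivariant ι M))) := by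
    rw [LinearMap.coe_comp]
    exact hinj2.comp hinj1
  have hle1 : Module.finrank F (H2 M) ≤ Module.finrank F (H2 (NRep ι M)) :=
    LinearMap.finrank_le_finrank_of_injective hcomp
  have hle2 : Module.finrank F (H2 (NRep ι M)) ≤ 3 * Module.finrank F (NRep ι M) :=
    quat_H2_bound (NRep ι M) hn
  have heq : Module.finrank F (groupCohomology M 2) = Module.finrank F (H2 M) :=
    (h2Equiv M).symm.finrank_eq
  have heq2 : Module.finrank F (NRep ι M) = Module.finrank F M.V := rfl
  rw [heq]
  calc Module.finrank F (H2 M) ≤ 3 * Module.finrank F (NRep ι M) := le_trans hle1 hle2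
    _ = 3 * Module.finrank F M.V := by rw [heq2]
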